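/- Assume in addition that A is Noetherian and that A^{1/p^∞} is flat as an A-module. Then for all nonzero f, g ∈ A one has ⋂_{n≥0} ( f·A^{1/p^∞} + g^{1−1/p^n}·A^{1/p^∞} ) = f·A^{1/p^∞} + g·A^{1/p^∞}, where g^{1−1/p^n} denotes the unique p^n-th root (g^{p^n−1})^{1/p^n} of g^{p^n−1} in A^{1/p^∞}. -/

import Mathlib

open Ideal TensorProduct

section AuxIter

variable {B : Type*} [CommRing B] (p : ℕ) [ExpChar B p] [PerfectRing B p]

private lemma r_iter_mul (n : ℕ) (x y : B) :
    (⇑(frobeniusEquiv B p).symm)^[n] (x * y)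
      = (⇑(frobeniusEquiv B p).symm)^[n] x * (⇑(frobeniusEquiv B p).symm)^[n] y := by
  induction n generalizing x y with
  | zero => rfl
  | succ n ih =>
    rw [Function.iterate_succ_apply, Function.iterate_succ_apply,
      Function.iterate_succ_apply, _root_.map_mul, ih]

private lemma r_iter_add (n : ℕ) (x y : B) :
    (⇑(frobeniusEquiv B p).symm)^[n] (x + y)
      = (⇑(frobeniusEquiv B p).symm)^[n] x + (⇑(frobeniusEquiv B p).symm)^[n] y := by
  induction n generalizing x y with
  | zero => rfl
  | succ n ih =>
    rw [Function.iterate_succ_apply, Function.iterate_succ_apply,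
      Function.iterate_succ_apply, _root_.map_add, ih]

private lemma r_iter_pow (n : ℕ) (x : B) :
    ((⇑(frobeniusEquiv B p).symm)^[n] x) ^ p ^ n = x := by
  induction n generalizing x with
  | zero => simp
  | succ n ih =>
    rw [Function.iterate_succ_apply, pow_succ, pow_mul, ih]
    exact frobeniusEquiv_symm_pow_p B p x

private lemma r_iter_root (n : ℕ) (x : B) :
    (⇑(frobeniusEquiv B p).symm)^[n] (x ^ p ^ n) = x := by
  induction n generalizing x with
  | zero => simp
  | succ n ih =>
    have h1 : x ^ p ^ (n + 1) = (x ^ p) ^ p ^ n := by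
      rw [← pow_mul, ← pow_succ']
    rw [Function.iterate_succ_apply', h1, ih]
    have := frobeniusEquiv_symm_apply_frobenius B p x
    rwa [frobenius_def] at this

end AuxIter

section AuxFlat

variable {A B : Type*} [CommRing A] [CommRing B] [Algebra A B]

/-- Flat base change commutes with ideal colon (by a single element): key lemma. -/
private lemma flat_colon [Module.Flat A B] (J : Ideal A) (z : A) (u : B)
    (h : u * algebraMap A B z ∈ J.map (algebraMap A B)) :
    u ∈ (J.colon (Ideal.span {z})).map (algebraMap A B) := by
  set 𝔟 : Ideal A := J.colon (Ideal.span {z}) with h𝔟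
  -- the injective map ψ : A⧸𝔟 →ₗ[A] A⧸J induced by multiplication by z
  set μ : A →ₗ[A] A ⧸ J := (Submodule.mkQ (J : Submodule A A)) ∘ₗ (z • LinearMap.id) with hμ
  have hker : (𝔟 : Submodule A A) ≤ LinearMap.ker μ := by
    intro w hw
    have hwz : w * z ∈ J := Ideal.mem_colon_span_singleton.mp hw
    simp only [hμ, LinearMap.mem_ker, LinearMap.comp_apply, LinearMap.smul_apply,
      LinearMap.id_apply, Submodule.mkQ_apply, Submodule.Quotient.mk_eq_zero]
    simpa [smul_eq_mul, mul_comm] using hwz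
  set ψ : (A ⧸ 𝔟) →ₗ[A] A ⧸ J := Submodule.liftQ (𝔟 : Submodule A A) μ hker with hψdef
  have hψ : Function.Injective ψ := by
    rw [← LinearMap.ker_eq_bot]
    apply Submodule.ker_liftQ_eq_bot
    intro w hw
    simp only [hμ, LinearMap.mem_ker, LinearMap.comp_apply, LinearMap.smul_apply,
      LinearMap.id_apply, Submodule.mkQ_apply, Submodule.Quotient.mk_eq_zero] at hw
    exact Ideal.mem_colon_span_singleton.mpr (by simpa [smul_eq_mul, mul_comm] using hw)
  have hinjT : Function.Injective (LinearMap.rTensor B ψ) :=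
    Module.Flat.rTensor_preserves_injective_linearMap (M := B) ψ hψ
  -- the element
  set t : (A ⧸ 𝔟) ⊗[A] B := (Ideal.Quotient.mk 𝔟 1) ⊗ₜ[A] u with ht
  have himg : LinearMap.rTensor B ψ t = (Ideal.Quotient.mk J z) ⊗ₜ[A] u := by
    rw [ht, LinearMap.rTensor_tmul]
    congr 1
    show ψ (Ideal.Quotient.mk 𝔟 1) = Ideal.Quotient.mk J z
    rw [← Ideal.Quotient.mk_eq_mk, hψdef, Submodule.liftQ_apply, hμ]
    simp [Ideal.Quotient.mk_eq_mk]
  have hzero : (Ideal.Quotient.mk J z) ⊗ₜ[A] u = 0 := by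
    apply (TensorProduct.quotTensorEquivQuotSMul B J).injective
    rw [map_zero, TensorProduct.quotTensorEquivQuotSMul_mk_tmul,
      Submodule.Quotient.mk_eq_zero, Ideal.smul_top_eq_map]
    have : z • u = u * algebraMap A B z := by
      rw [Algebra.smul_def, mul_comm]
    rw [this]
    exact h
  have ht0 : t = 0 := hinjT (by rw [himg, hzero, map_zero])
  have := congrArg (TensorProduct.quotTensorEquivQuotSMul B 𝔟) ht0
  rw [ht, map_zero, TensorProduct.quotTensorEquivQuotSMul_mk_tmul,
    Submodule.Quotient.mk_eq_zero, Ideal.smul_top_eq_map] at this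
  simpa using this

end AuxFlat

section AuxPurity

variable {p : ℕ} {A B : Type*} [CommRing A] [CommRing B] [Algebra A B]

private lemma map_ne_top (hinj : Function.Injective (algebraMap A B))
    (hroots : ∀ b : B, ∃ n : ℕ, b ^ p ^ n ∈ (algebraMap A B).range)
    (hp : 0 < p) (J : Ideal A) (hJ : J ≠ ⊤) :
    J.map (algebraMap A B) ≠ ⊤ := by
  have hint : (algebraMap A B).IsIntegral := by
    intro b
    obtain ⟨k, c, hc⟩ := hroots b
    refine ⟨Polynomial.X ^ p ^ k - Polynomial.C c, ?_, ?_⟩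
    · exact Polynomial.monic_X_pow_sub_C c (by positivity)
    · simp [hc]
  have hker : RingHom.ker (algebraMap A B) ≤ J := by
    rw [(RingHom.injective_iff_ker_eq_bot _).mp hinj]
    exact bot_le
  rw [Ne, Ideal.map_eq_top_iff_of_ker_le (algebraMap A B) hker hint]
  exact hJ

private lemma purity [Module.Flat A B]
    (hinj : Function.Injective (algebraMap A B))
    (hroots : ∀ b : B, ∃ n : ℕ, b ^ p ^ n ∈ (algebraMap A B).range)
    (hp : 0 < p) (J : Ideal A) (z : A)
    (h : algebraMap A B z ∈ J.map (algebraMap A B)) : z ∈ J := by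
  have h1 : (1 : B) * algebraMap A B z ∈ J.map (algebraMap A B) := by simpa using h
  have hmem := flat_colon J z 1 h1
  by_contra hz
  have h𝔟 : J.colon (Ideal.span {z}) ≠ ⊤ := by
    intro htop
    have h1' : (1 : A) ∈ J.colon (Ideal.span {z}) := htop ▸ Submodule.mem_top
    exact hz (by simpa using Ideal.mem_colon_span_singleton.mp h1')
  exact map_ne_top hinj hroots hp _ h𝔟 ((Ideal.eq_top_iff_one _).mpr hmem)

end AuxPurity

/-- Let `A` be a Noetherian domain of characteristic `p`, and let `B` be its perfect closure
`A^{1/p^∞}` (a perfect ring containing `A` such that every element has some `p`-power in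
`A`); assume `B` is flat as an `A`-module.  Then for all nonzero `f, g ∈ A` one has
`⋂ₙ (f·B + g^{1−1/pⁿ}·B) = f·B + g·B`, where `g^{1−1/pⁿ} = (g^{pⁿ−1})^{1/pⁿ}`. -/
theorem stmt_9 (p : ℕ) [Fact p.Prime]
    (A : Type*) [CommRing A] [IsDomain A] [IsNoetherianRing A] [CharP A p]
    (B : Type*) [CommRing B] [CharP B p] [ExpChar B p] [PerfectRing B p]
    [Algebra A B] (hinj : Function.Injective (algebraMap A B))
    (hroots : ∀ b : B, ∃ n : ℕ, b ^ p ^ n ∈ (algebraMap A B).range)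
    [Module.Flat A B]
    (f g : A) (hf : f ≠ 0) (hg : g ≠ 0) :
    (⨅ n : ℕ, Ideal.span {algebraMap A B f,
        ((frobeniusEquiv B p).symm)^[n] (algebraMap A B g ^ (p ^ n - 1))}) =
      Ideal.span {algebraMap A B f, algebraMap A B g} := by
  have hp : p.Prime := Fact.out
  set φ := algebraMap A B with hφ
  set F := φ f with hF
  set G := φ g with hG
  apply le_antisymm
  · -- hard direction
    intro x hx
    have hx' : ∀ n : ℕ, x ∈ Ideal.span {F, (⇑(frobeniusEquiv B p).symm)^[n] (G ^ (p ^ n - 1))} :=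
      fun n => (Submodule.mem_iInf _).mp hx n
    obtain ⟨m, z, hz⟩ := hroots x
    have hQ1 : 1 ≤ p ^ m := Nat.one_le_pow _ _ hp.pos
    set I : Ideal A := Ideal.span {f ^ p ^ m, g ^ p ^ m} with hI
    set 𝔞 : Ideal A := I.colon (Ideal.span {z}) with h𝔞
    have hmapI : I.map φ = Ideal.span {F ^ p ^ m, G ^ p ^ m} := by
      rw [hI, Ideal.map_span]
      simp [Set.image_insert_eq, map_pow]
      rfl
    have key : ∀ n : ℕ, g ^ p ^ m ∈ 𝔞 ^ (p ^ n) := by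
      intro n
      obtain ⟨a, b, hab⟩ := Ideal.mem_span_pair.mp (hx' (m + n))
      have hP1 : 1 ≤ p ^ (m + n) := Nat.one_le_pow _ _ hp.pos
      have hPQN : p ^ (m + n) = p ^ m * p ^ n := pow_add p m n
      have hgpow : ((⇑(frobeniusEquiv B p).symm)^[m + n] (G ^ (p ^ (m + n) - 1))) ^ p ^ (m + n)
          = G ^ (p ^ (m + n) - 1) := r_iter_pow p (m + n) _
      have hfresh : x ^ p ^ (m + n)
          = a ^ p ^ (m + n) * F ^ p ^ (m + n) + b ^ p ^ (m + n) * G ^ (p ^ (m + n) - 1) := by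
        rw [← hab, add_pow_char_pow, mul_pow, mul_pow, hgpow]
      have hGG : G ^ (p ^ (m + n) - 1) * G ^ p ^ m = G ^ (p ^ m - 1) * G ^ p ^ (m + n) := by
        rw [← pow_add, ← pow_add]
        congr 1
        omega
      have hmain : G ^ p ^ m * x ^ p ^ (m + n)
          = (a ^ p ^ (m + n) * G ^ p ^ m) * (F ^ p ^ m) ^ p ^ n
            + (b ^ p ^ (m + n) * G ^ (p ^ m - 1)) * (G ^ p ^ m) ^ p ^ n := by
        rw [hfresh, ← pow_mul, ← pow_mul, ← hPQN, mul_add,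
          show G ^ p ^ m * (b ^ p ^ (m + n) * G ^ (p ^ (m + n) - 1))
            = b ^ p ^ (m + n) * (G ^ (p ^ (m + n) - 1) * G ^ p ^ m) by ring, hGG]
        ring
      set u := (⇑(frobeniusEquiv B p).symm)^[n] (G ^ p ^ m) with hu
      have happ : u * φ z ∈ I.map φ := by
        have h1 : (⇑(frobeniusEquiv B p).symm)^[n] (G ^ p ^ m * x ^ p ^ (m + n)) = u * φ z := by
          rw [r_iter_mul, ← hu]
          congr 1
          have hxP : x ^ p ^ (m + n) = (x ^ p ^ m) ^ p ^ n := by rw [← pow_mul, ← hPQN]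
          rw [hxP, r_iter_root, hz]
        have h2 : (⇑(frobeniusEquiv B p).symm)^[n]
              ((a ^ p ^ (m + n) * G ^ p ^ m) * (F ^ p ^ m) ^ p ^ n
                + (b ^ p ^ (m + n) * G ^ (p ^ m - 1)) * (G ^ p ^ m) ^ p ^ n)
            = (⇑(frobeniusEquiv B p).symm)^[n] (a ^ p ^ (m + n) * G ^ p ^ m) * F ^ p ^ m
              + (⇑(frobeniusEquiv B p).symm)^[n] (b ^ p ^ (m + n) * G ^ (p ^ m - 1))
                * G ^ p ^ m := by
          simp only [r_iter_add p, r_iter_mul p, r_iter_root p]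
        have heq : u * φ z
            = (⇑(frobeniusEquiv B p).symm)^[n] (a ^ p ^ (m + n) * G ^ p ^ m) * F ^ p ^ m
              + (⇑(frobeniusEquiv B p).symm)^[n] (b ^ p ^ (m + n) * G ^ (p ^ m - 1))
                * G ^ p ^ m := by
          rw [← h1, hmain, h2]
        rw [hmapI]
        exact Ideal.mem_span_pair.mpr ⟨_, _, heq.symm⟩
      have hcolon : u ∈ 𝔞.map φ := flat_colon I z u happ
      have hupow : u ^ p ^ n = G ^ p ^ m := r_iter_pow p n _
      have hGQmem : φ (g ^ p ^ m) ∈ (𝔞 ^ p ^ n).map φ := by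
        rw [Ideal.map_pow]
        have := Ideal.pow_mem_pow hcolon (p ^ n)
        rwa [hupow, ← map_pow] at this
      exact purity hinj hroots hp.pos _ _ hGQmem
    have h𝔞top : 𝔞 = ⊤ := by
      by_contra h𝔞ne
      have hmem : g ^ p ^ m ∈ ⨅ i : ℕ, 𝔞 ^ i := by
        rw [Submodule.mem_iInf]
        intro i
        exact Ideal.pow_le_pow_right (Nat.lt_pow_self (n := i) hp.one_lt).le (key i)
      rw [Ideal.iInf_pow_eq_bot_of_isDomain _ h𝔞ne] at hmem
      exact pow_ne_zero (p ^ m) hg (by simpa using hmem)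
    have hzI : z ∈ I := by
      have h1 : (1 : A) ∈ 𝔞 := h𝔞top ▸ Submodule.mem_top
      simpa using Ideal.mem_colon_span_singleton.mp h1
    obtain ⟨α, β, hαβ⟩ := Ideal.mem_span_pair.mp hzI
    have hx0 : x = (⇑(frobeniusEquiv B p).symm)^[m] (φ z) := by
      rw [hz]
      exact (r_iter_root p m x).symm
    have hfinal : x = (⇑(frobeniusEquiv B p).symm)^[m] (φ α) * F
        + (⇑(frobeniusEquiv B p).symm)^[m] (φ β) * G := by
      rw [hx0, ← hαβ, _root_.map_add, _root_.map_mul, _root_.map_mul, _root_.map_pow,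
        _root_.map_pow, ← hF, ← hG, r_iter_add, r_iter_mul, r_iter_mul, r_iter_root, r_iter_root]
    exact Ideal.mem_span_pair.mpr ⟨_, _, hfinal.symm⟩
  · -- easy direction
    refine le_iInf fun n => ?_
    rw [Ideal.span_le]
    intro y hy
    rcases hy with rfl | hy
    · exact Ideal.subset_span (Set.mem_insert _ _)
    · rw [Set.mem_singleton_iff] at hy
      subst hy
      have hpos : 1 ≤ p ^ n := Nat.one_le_pow _ _ hp.pos
      have hinjpow : Function.Injective (fun t : B => t ^ p ^ n) := by
        intro s t hst
        have h' := congrArg ((⇑(frobeniusEquiv B p).symm)^[n]) hst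
        simp only at h'
        rw [r_iter_root, r_iter_root] at h'
        exact h'
      have hGfact : G = (⇑(frobeniusEquiv B p).symm)^[n] G
          * (⇑(frobeniusEquiv B p).symm)^[n] (G ^ (p ^ n - 1)) := by
        apply hinjpow
        show G ^ p ^ n = _ ^ p ^ n
        rw [mul_pow, r_iter_pow, r_iter_pow, ← pow_succ']
        congr 1
        omega
      have hmem : (⇑(frobeniusEquiv B p).symm)^[n] G
          * (⇑(frobeniusEquiv B p).symm)^[n] (G ^ (p ^ n - 1))
          ∈ Ideal.span {F, (⇑(frobeniusEquiv B p).symm)^[n] (G ^ (p ^ n - 1))} :=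
        Ideal.mul_mem_left _ _ (Ideal.subset_span (by simp))
      rwa [← hGfact] at hmem
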